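/- For every k ≥ 1, the group of order-automorphisms of the face poset of the k-cube is isomorphic to the semidirect product (Fin k → ZMod 2) ⋊ Equiv.Perm (Fin k), where a permutation σ of Fin k acts on v : Fin k → ZMod 2 by v ↦ v ∘ σ⁻¹ (the hyperoctahedral group (ℤ/2ℤ)^k ⋊ Sym(k)). -/

import Mathlib

universe u v

/-- An abstract polytope of rank `n ≥ -1`: a partial order with a least element (the `⊥` of the
`OrderBot` instance) and a greatest element, in which every maximal chain has exactly `n + 2`
elements, every interval admitting a maximal chain of at least 4 elements is connected, and the
diamond condition holds. -/
structure IsAbstractPolytope (P : Type u) [PartialOrder P] [OrderBot P] (n : ℤ) : Prop where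
  neg_one_le : -1 ≤ n
  exists_top : ∃ t : P, IsTop t
  maxChain_card : ∀ s : Set P, IsMaxChain (· ≤ ·) s → s.ncard = (n + 2).toNat
  connected : ∀ x z : P, x ≤ z →
      (∃ c : Set (Set.Icc x z), IsMaxChain (· ≤ ·) c ∧ 4 ≤ c.ncard) →
      ∀ F G : Set.Icc x z, (F : P) ≠ x → (F : P) ≠ z → (G : P) ≠ x → (G : P) ≠ z →
        Relation.ReflTransGen
          (fun a b : Set.Icc x z =>
            ((a : P) ≠ x ∧ (a : P) ≠ z ∧ (b : P) ≠ x ∧ (b : P) ≠ z) ∧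
              ((a : P) ≤ (b : P) ∨ (b : P) ≤ (a : P))) F G
  diamond : ∀ x z : P, x < z →
      (∀ c : Set (Set.Icc x z), IsMaxChain (· ≤ ·) c → c.ncard = 4) →
      {y : P | x < y ∧ y < z}.ncard = 2

/-- `x` has rank `k` if every maximal chain of the interval `[⊥, x] = Set.Iic x`
has exactly `k + 2` elements. -/
def HasRank {P : Type u} [PartialOrder P] [OrderBot P] (x : P) (k : ℤ) : Prop :=
  ∀ c : Set (Set.Iic x), IsMaxChain (· ≤ ·) c → c.ncard = (k + 2).toNat

/-- The Cartesian product `P ×c Q` of two bounded posets: the subposet of `P × Q`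
consisting of `(⊥, ⊥)` together with all pairs with both entries different from `⊥`.
(The join `P * Q` is just `P × Q` with the componentwise order.) -/
abbrev CartProd (P : Type u) (Q : Type v) [PartialOrder P] [OrderBot P]
    [PartialOrder Q] [OrderBot Q] : Type (max u v) :=
  {x : P × Q // x = (⊥, ⊥) ∨ (x.1 ≠ ⊥ ∧ x.2 ≠ ⊥)}

instance CartProd.instOrderBot (P : Type u) (Q : Type v) [PartialOrder P] [OrderBot P]
    [PartialOrder Q] [OrderBot Q] : OrderBot (CartProd P Q) where
  bot := ⟨(⊥, ⊥), Or.inl rfl⟩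
  bot_le x := show ((⊥, ⊥) : P × Q) ≤ x.val from bot_le

/-- The iterated Cartesian product of a family of bounded posets: tuples which are either
everywhere `⊥` or nowhere `⊥`. -/
abbrev CartPi {ι : Type v} (Q : ι → Type u) [∀ i, PartialOrder (Q i)] [∀ i, OrderBot (Q i)] :
    Type (max u v) :=
  {f : (i : ι) → Q i // (∀ i, f i = ⊥) ∨ (∀ i, f i ≠ ⊥)}

instance CartPi.instOrderBot {ι : Type v} (Q : ι → Type u) [∀ i, PartialOrder (Q i)]
    [∀ i, OrderBot (Q i)] : OrderBot (CartPi Q) where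
  bot := ⟨fun _ => ⊥, Or.inl fun _ => rfl⟩
  bot_le f := show (fun _ => ⊥) ≤ f.val from bot_le

/-- The `k`-fold Cartesian product of a bounded poset with itself. -/
abbrev CartPow (P : Type u) [PartialOrder P] [OrderBot P] (k : ℕ) : Type u :=
  CartPi (fun _ : Fin k => P)

/-- A bundled poset with a least element. -/
structure BddPoset : Type (u + 1) where
  carrier : Type u
  [po : PartialOrder carrier]
  [ob : OrderBot carrier]

attribute [instance] BddPoset.po BddPoset.ob

instance : CoeSort BddPoset.{u} (Type u) := ⟨BddPoset.carrier⟩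

/-- Prime with respect to the join: not order-isomorphic to a join `A * B = A × B` of two
abstract polytopes of rank at least `0`. -/
def JoinPrime (X : Type u) [PartialOrder X] [OrderBot X] : Prop :=
  ¬ ∃ (A B : BddPoset.{u}) (a b : ℤ), 0 ≤ a ∧ 0 ≤ b ∧
      IsAbstractPolytope A.carrier a ∧ IsAbstractPolytope B.carrier b ∧
      Nonempty (X ≃o (A.carrier × B.carrier))

/-- Prime with respect to the Cartesian product: not order-isomorphic to a Cartesian product
of two abstract polytopes of rank at least `1`. -/
def CartPrime (X : Type u) [PartialOrder X] [OrderBot X] : Prop :=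
  ¬ ∃ (A B : BddPoset.{u}) (a b : ℤ), 1 ≤ a ∧ 1 ≤ b ∧
      IsAbstractPolytope A.carrier a ∧ IsAbstractPolytope B.carrier b ∧
      Nonempty (X ≃o CartProd A.carrier B.carrier)

/-- `R` is a factor of `X` with respect to the join. -/
def JoinFactor (R : BddPoset.{u}) (X : Type u) [PartialOrder X] [OrderBot X] : Prop :=
  ∃ S : BddPoset.{u}, (∃ s : ℤ, IsAbstractPolytope S.carrier s) ∧
    Nonempty (X ≃o (R.carrier × S.carrier))

/-- `R` is a factor of `X` with respect to the Cartesian product. -/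
def CartFactor (R : BddPoset.{u}) (X : Type u) [PartialOrder X] [OrderBot X] : Prop :=
  ∃ S : BddPoset.{u}, (∃ s : ℤ, IsAbstractPolytope S.carrier s) ∧
    Nonempty (X ≃o CartProd R.carrier S.carrier)

/-- Relatively prime with respect to the join: no join-prime abstract polytope of rank `≥ 0` is a
join-factor of both. -/
def JoinRelPrime (X : Type u) [PartialOrder X] [OrderBot X]
    (Y : Type u) [PartialOrder Y] [OrderBot Y] : Prop :=
  ¬ ∃ R : BddPoset.{u}, (∃ r : ℤ, 0 ≤ r ∧ IsAbstractPolytope R.carrier r) ∧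
      JoinPrime R.carrier ∧ JoinFactor R X ∧ JoinFactor R Y

/-- Relatively prime with respect to the Cartesian product. -/
def CartRelPrime (X : Type u) [PartialOrder X] [OrderBot X]
    (Y : Type u) [PartialOrder Y] [OrderBot Y] : Prop :=
  ¬ ∃ R : BddPoset.{u}, (∃ r : ℤ, 1 ≤ r ∧ IsAbstractPolytope R.carrier r) ∧
      CartPrime R.carrier ∧ CartFactor R X ∧ CartFactor R Y

/-- A pyramid: order-isomorphic to `Q * pt` for some abstract polytope `Q`, where
`pt = Bool` is the two-element chain. -/
def IsPyramid (X : Type u) [PartialOrder X] [OrderBot X] : Prop :=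
  ∃ Q : BddPoset.{u}, (∃ q : ℤ, IsAbstractPolytope Q.carrier q) ∧
    Nonempty (X ≃o (Q.carrier × Bool))

/-- A prism: order-isomorphic to `Q ×c I` for some abstract polytope `Q`, where
`I = Bool × Bool` is the four-element rank-one polytope. -/
def IsPrism (X : Type u) [PartialOrder X] [OrderBot X] : Prop :=
  ∃ Q : BddPoset.{u}, (∃ q : ℤ, IsAbstractPolytope Q.carrier q) ∧
    Nonempty (X ≃o CartProd Q.carrier (Bool × Bool))

/-- The homomorphism from `Equiv.Perm ι` to automorphisms of `ι → G` permuting the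
coordinates: `σ` sends `v` to `v ∘ σ⁻¹`. -/
def permHom (ι : Type v) (G : Type u) [Group G] : Equiv.Perm ι →* MulAut (ι → G) where
  toFun σ :=
    { toFun := fun v => v ∘ σ.symm
      invFun := fun v => v ∘ σ
      left_inv := fun v => by funext i; simp
      right_inv := fun v => by funext i; simp
      map_mul' := fun v w => rfl }
  map_one' := by apply MulEquiv.ext; intro v; funext i; rfl
  map_mul' σ τ := by apply MulEquiv.ext; intro v; funext i; rfl

/-- The face poset of the `k`-cube: subsets of `Fin k → Bool` that are empty or subcubes,
ordered by inclusion. -/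
def CubeFaces (k : ℕ) : Set (Set (Fin k → Bool)) :=
  {A | A = ∅ ∨ ∃ (S : Set (Fin k)) (f : Fin k → Bool),
    A = {g : Fin k → Bool | ∀ i ∉ S, g i = f i}}


section AutCubeAux

variable {k : ℕ}

/-- The sign bit of an element of `Multiplicative (ZMod 2)`. -/
def bitM (x : Multiplicative (ZMod 2)) : Bool := decide (Multiplicative.toAdd x = 1)

lemma bitM_mul (x y : Multiplicative (ZMod 2)) : bitM (x * y) = xor (bitM x) (bitM y) := by
  revert x y; decide

lemma bitM_one : bitM (1 : Multiplicative (ZMod 2)) = false := by decide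

/-- The point permutation of the cube given by flips `v` and coordinate permutation `σ`. -/
def permPt (v : Fin k → Multiplicative (ZMod 2)) (σ : Equiv.Perm (Fin k)) :
    Equiv.Perm (Fin k → Bool) where
  toFun g := fun j => xor (g (σ.symm j)) (bitM (v j))
  invFun h := fun i => xor (h (σ i)) (bitM (v (σ i)))
  left_inv g := by funext i; simp [Bool.xor_assoc]
  right_inv h := by funext j; simp [Bool.xor_assoc]

lemma permPt_apply (v : Fin k → Multiplicative (ZMod 2)) (σ : Equiv.Perm (Fin k))
    (g : Fin k → Bool) (j : Fin k) :
    permPt v σ g j = xor (g (σ.symm j)) (bitM (v j)) := rfl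

lemma permPt_mul (v w : Fin k → Multiplicative (ZMod 2)) (σ τ : Equiv.Perm (Fin k)) (g : Fin k → Bool) :
    permPt v σ (permPt w τ g)
      = permPt (v * (permHom (Fin k) (Multiplicative (ZMod 2))) σ w) (σ * τ) g := by
  funext j
  have h1 : (σ * τ).symm j = τ.symm (σ.symm j) := rfl
  have h2 : (v * (permHom (Fin k) (Multiplicative (ZMod 2))) σ w) j = v j * w (σ.symm j) := rfl
  simp only [permPt_apply, h1, h2, bitM_mul]
  cases g (τ.symm (σ.symm j)) <;> cases bitM (w (σ.symm j)) <;> cases bitM (v j) <;> rfl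

lemma image_mem_cubeFaces (v : Fin k → Multiplicative (ZMod 2)) (σ : Equiv.Perm (Fin k))
    {A : Set (Fin k → Bool)} (hA : A ∈ CubeFaces k) : permPt v σ '' A ∈ CubeFaces k := by
  rcases hA with rfl | ⟨S, f, rfl⟩
  · left; simp
  · right
    refine ⟨σ '' S, fun j => xor (f (σ.symm j)) (bitM (v j)), ?_⟩
    ext h
    constructor
    · rintro ⟨g, hg, rfl⟩ j hj
      have hs : σ.symm j ∉ S := fun hm => hj ⟨_, hm, by simp⟩
      rw [permPt_apply, hg _ hs]
    · intro hh
      refine ⟨(permPt v σ).symm h, ?_, (permPt v σ).apply_symm_apply h⟩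
      intro i hi
      have h1 : σ i ∉ σ '' S := by
        rintro ⟨m, hm, hmi⟩; exact hi (σ.injective hmi ▸ hm)
      have h2 := hh (σ i) h1
      show xor (h (σ i)) (bitM (v (σ i))) = f i
      rw [h2]
      simp [Bool.xor_assoc]

lemma permPt_symm (v : Fin k → Multiplicative (ZMod 2)) (σ : Equiv.Perm (Fin k)) :
    (permPt v σ).symm = permPt (fun i => v (σ i)) σ⁻¹ := by
  apply Equiv.ext
  intro h
  funext i
  rfl

/-- The order-automorphism of the face poset induced by `(v, σ)`. -/
def cubeIso (v : Fin k → Multiplicative (ZMod 2)) (σ : Equiv.Perm (Fin k)) :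
    (CubeFaces k : Set (Set (Fin k → Bool))) ≃o CubeFaces k where
  toFun A := ⟨permPt v σ '' A.val, image_mem_cubeFaces v σ A.2⟩
  invFun A := ⟨(permPt v σ).symm '' A.val, by
    rw [permPt_symm]; exact image_mem_cubeFaces _ _ A.2⟩
  left_inv A := Subtype.ext ((permPt v σ).symm_image_image A.val)
  right_inv A := Subtype.ext ((permPt v σ).image_symm_image A.val)
  map_rel_iff' {A B} := by
    show permPt v σ '' A.val ⊆ permPt v σ '' B.val ↔ A.val ⊆ B.val
    exact Set.image_subset_image_iff (permPt v σ).injective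

lemma cubeIso_apply_val (v : Fin k → Multiplicative (ZMod 2)) (σ : Equiv.Perm (Fin k))
    (A : CubeFaces k) : (cubeIso v σ A).val = permPt v σ '' A.val := rfl

/-- The homomorphism from the hyperoctahedral group to automorphisms of the face poset. -/
def cubeHom (k : ℕ) :
    ((Fin k → Multiplicative (ZMod 2))
        ⋊[permHom (Fin k) (Multiplicative (ZMod 2))] Equiv.Perm (Fin k)) →*
      ((CubeFaces k : Set (Set (Fin k → Bool))) ≃o CubeFaces k) where
  toFun g := cubeIso g.left g.right
  map_one' := by
    apply RelIso.ext
    intro A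
    apply Subtype.ext
    show permPt 1 1 '' A.val = A.val
    have : permPt (1 : Fin k → Multiplicative (ZMod 2)) 1 = Equiv.refl _ := by
      apply Equiv.ext; intro g; funext j
      show xor (g ((1 : Equiv.Perm (Fin k)).symm j)) (bitM 1) = g j
      simp [bitM_one]
      rfl
    rw [this]; simp
  map_mul' a b := by
    apply RelIso.ext
    intro A
    apply Subtype.ext
    show permPt (a * b).left (a * b).right '' A.val
      = permPt a.left a.right '' (permPt b.left b.right '' A.val)
    rw [Set.image_image]
    apply Set.image_congr
    intro g _
    rw [SemidirectProduct.mul_left, SemidirectProduct.mul_right, ← permPt_mul]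

/-- Hyperplane face. -/
def Hf (i : Fin k) (b : Bool) : Set (Fin k → Bool) := {g | g i = b}

lemma Hf_mem (i : Fin k) (b : Bool) : Hf i b ∈ CubeFaces k := by
  right
  refine ⟨{i}ᶜ, fun _ => b, ?_⟩
  ext g
  simp only [Hf, Set.mem_setOf_eq, Set.mem_compl_iff, Set.mem_singleton_iff, not_not]
  constructor
  · rintro hb j rfl; exact hb
  · intro h; exact h i rfl

lemma Hf_ne_univ (i : Fin k) (b : Bool) : Hf i b ≠ Set.univ := by
  intro h
  have : (fun _ => !b) ∈ Hf i b := h ▸ Set.mem_univ _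
  simp [Hf] at this

lemma Hf_inter_nonempty {i j : Fin k} {b c : Bool} (h : ¬(i = j ∧ b = !c)) :
    (Hf i b ∩ Hf j c).Nonempty := by
  refine ⟨fun m => if m = j then c else b, ?_, ?_⟩
  · show (if i = j then c else b) = b
    by_cases hij : i = j
    · rw [if_pos hij]
      by_contra hbc
      exact h ⟨hij, by cases b <;> cases c <;> simp_all⟩
    · rw [if_neg hij]
  · show (if j = j then c else b) = c
    rw [if_pos rfl]

lemma Hf_disjoint_iff {i j : Fin k} {b c : Bool} (h : Hf i b ∩ Hf j c = ∅) :
    i = j ∧ b = !c := by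
  by_contra hc
  rcases Hf_inter_nonempty hc with ⟨g, hg⟩
  rw [h] at hg
  exact hg

lemma Hf_injective {i j : Fin k} {b c : Bool} (h : Hf i b = Hf j c) : i = j ∧ b = c := by
  by_cases hij : i = j
  · subst hij
    refine ⟨rfl, ?_⟩
    by_contra hbc
    have : (fun _ => b) ∈ Hf i b := rfl
    rw [h] at this
    have : b = c := this
    exact hbc this
  · exfalso
    have hg : (fun m => if m = j then !c else b) ∈ Hf i b := by
      show (if i = j then !c else b) = b
      rw [if_neg hij]
    rw [h] at hg
    have : (if j = j then !c else b) = c := hg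
    rw [if_pos rfl] at this
    exact (Bool.not_ne_self c) this

lemma singleton_mem_cubeFaces (g : Fin k → Bool) : {g} ∈ CubeFaces k := by
  right
  refine ⟨∅, g, ?_⟩
  ext h
  simp [funext_iff, eq_comm]

lemma univ_mem_cubeFaces : Set.univ ∈ CubeFaces k := by
  right
  exact ⟨Set.univ, fun _ => false, by ext g; simp⟩

lemma empty_mem_cubeFaces : (∅ : Set (Fin k → Bool)) ∈ CubeFaces k := Or.inl rfl

lemma face_nonempty {A : Set (Fin k → Bool)} (hA : A ∈ CubeFaces k) (h : A ≠ ∅) :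
    A.Nonempty := Set.nonempty_iff_ne_empty.mpr h

/-- A minimal nonempty face is a singleton. -/
lemma minimal_is_singleton {A : Set (Fin k → Bool)} (hA : A ∈ CubeFaces k) (hne : A ≠ ∅)
    (hmin : ∀ B ∈ CubeFaces k, B ⊆ A → B = ∅ ∨ B = A) : ∃ g, A = {g} := by
  rcases Set.nonempty_iff_ne_empty.mpr hne with ⟨g, hg⟩
  refine ⟨g, ?_⟩
  rcases hmin {g} (singleton_mem_cubeFaces g) (Set.singleton_subset_iff.mpr hg) with h | h
  · exact absurd h (Set.singleton_ne_empty g)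
  · exact h.symm

/-- A nonempty proper face is contained in some hyperplane. -/
lemma face_subset_Hf {A : Set (Fin k → Bool)} (hA : A ∈ CubeFaces k)
    (hne : A ≠ ∅) (hnu : A ≠ Set.univ) : ∃ i b, A ⊆ Hf i b := by
  rcases hA with rfl | ⟨S, f, rfl⟩
  · exact absurd rfl hne
  · by_cases hS : ∀ i, i ∈ S
    · exfalso
      apply hnu
      ext g
      simp only [Set.mem_setOf_eq, Set.mem_univ, iff_true]
      intro i hi
      exact absurd (hS i) hi
    · push_neg at hS
      rcases hS with ⟨i, hi⟩
      exact ⟨i, f i, fun g hg => hg i hi⟩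

/-- Hyperplanes are coatoms. -/
lemma Hf_coatom {i : Fin k} {b : Bool} {B : Set (Fin k → Bool)} (hB : B ∈ CubeFaces k)
    (hsub : Hf i b ⊆ B) (hnu : B ≠ Set.univ) : B = Hf i b := by
  have hBne : B ≠ ∅ := by
    intro h
    have : (fun _ => b) ∈ B := hsub rfl
    rw [h] at this
    exact this
  rcases hB with rfl | ⟨S, f, rfl⟩
  · exact absurd rfl hBne
  · have hkey : ∀ j ∉ S, j = i := by
      intro j hj
      by_contra hji
      have hg : (fun m => if m = i then b else !(f j)) ∈ Hf i b := by
        show (if i = i then b else !(f j)) = b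
        rw [if_pos rfl]
      have := hsub hg j hj
      rw [if_neg hji] at this
      exact (Bool.not_ne_self (f j)) this
    have hiS : i ∉ S := by
      intro hiS
      apply hnu
      ext g
      simp only [Set.mem_setOf_eq, Set.mem_univ, iff_true]
      intro j hj
      exact absurd (hkey j hj ▸ hiS) hj
    have hmem : (fun _ : Fin k => b) ∈ Hf i b := rfl
    have hfi : f i = b := (hsub hmem i hiS).symm
    ext g
    constructor
    · intro hg
      exact hg i hiS |>.trans hfi
    · intro hg j hj
      rw [hkey j hj]
      exact hg.trans hfi.symm
    
/-- Coatoms are hyperplanes. -/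
lemma coatom_is_Hf (hk : 1 ≤ k) {A : Set (Fin k → Bool)} (hA : A ∈ CubeFaces k)
    (hnu : A ≠ Set.univ)
    (hco : ∀ B ∈ CubeFaces k, A ⊆ B → B = A ∨ B = Set.univ) : ∃ i b, A = Hf i b := by
  have hne : A ≠ ∅ := by
    rintro rfl
    have i0 : Fin k := ⟨0, hk⟩
    rcases hco (Hf i0 true) (Hf_mem i0 true) (Set.empty_subset _) with h | h
    · have : (fun _ => true) ∈ Hf i0 true := rfl
      rw [h] at this
      exact this
    · exact Hf_ne_univ i0 true h
  rcases face_subset_Hf hA hne hnu with ⟨i, b, hsub⟩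
  rcases hco (Hf i b) (Hf_mem i b) hsub with h | h
  · exact ⟨i, b, h.symm⟩
  · exact absurd h (Hf_ne_univ i b)

lemma le_mk {A B : (CubeFaces k : Set (Set (Fin k → Bool)))} (h : A.val ⊆ B.val) : A ≤ B := h

lemma le_val {A B : (CubeFaces k : Set (Set (Fin k → Bool)))} (h : A ≤ B) : A.val ⊆ B.val := h

lemma map_empty (φ : (CubeFaces k : Set (Set (Fin k → Bool))) ≃o CubeFaces k) :
    φ ⟨∅, empty_mem_cubeFaces⟩ = ⟨∅, empty_mem_cubeFaces⟩ := by
  apply le_antisymm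
  · have h1 : (⟨∅, empty_mem_cubeFaces⟩ : CubeFaces k) ≤ φ.symm ⟨∅, empty_mem_cubeFaces⟩ :=
      le_mk (Set.empty_subset _)
    have h2 := φ.monotone h1
    rwa [φ.apply_symm_apply] at h2
  · exact le_mk (Set.empty_subset _)

lemma map_univ (φ : (CubeFaces k : Set (Set (Fin k → Bool))) ≃o CubeFaces k) :
    φ ⟨Set.univ, univ_mem_cubeFaces⟩ = ⟨Set.univ, univ_mem_cubeFaces⟩ := by
  apply le_antisymm
  · exact le_mk (Set.subset_univ _)
  · have h1 : φ.symm ⟨Set.univ, univ_mem_cubeFaces⟩ ≤ ⟨Set.univ, univ_mem_cubeFaces⟩ :=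
      le_mk (Set.subset_univ _)
    have h2 := φ.monotone h1
    rwa [φ.apply_symm_apply] at h2

lemma orderIso_singleton (φ : (CubeFaces k : Set (Set (Fin k → Bool))) ≃o CubeFaces k)
    (g : Fin k → Bool) : ∃ h, (φ ⟨{g}, singleton_mem_cubeFaces g⟩).val = {h} := by
  obtain ⟨h, hh⟩ := minimal_is_singleton (φ ⟨{g}, singleton_mem_cubeFaces g⟩).2
    (by
      intro hA0
      have h1 : φ ⟨{g}, singleton_mem_cubeFaces g⟩ = ⟨∅, empty_mem_cubeFaces⟩ :=
        Subtype.ext hA0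
      have h2 := congrArg φ.symm h1
      rw [φ.symm_apply_apply, map_empty φ.symm] at h2
      exact Set.singleton_ne_empty g (congrArg Subtype.val h2))
    (by
      intro B hB hBA
      by_cases hB0 : B = ∅
      · exact Or.inl hB0
      · right
        have h1 : (⟨B, hB⟩ : CubeFaces k) ≤ φ ⟨{g}, singleton_mem_cubeFaces g⟩ := le_mk hBA
        have h2 := φ.symm.monotone h1
        rw [φ.symm_apply_apply] at h2
        rcases Set.subset_singleton_iff_eq.mp (le_val h2) with h3 | h3
        · exfalso
          have h4 : φ.symm ⟨B, hB⟩ = ⟨∅, empty_mem_cubeFaces⟩ := Subtype.ext h3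
          have h5 := congrArg φ h4
          rw [φ.apply_symm_apply, map_empty φ] at h5
          exact hB0 (congrArg Subtype.val h5)
        · have h4 : φ.symm ⟨B, hB⟩ = ⟨{g}, singleton_mem_cubeFaces g⟩ := Subtype.ext h3
          have h5 := congrArg φ h4
          rw [φ.apply_symm_apply] at h5
          exact congrArg Subtype.val h5)
  exact ⟨h, hh⟩

lemma bitM_eq_one {x : Multiplicative (ZMod 2)} (h : bitM x = false) : x = 1 := by
  revert h; revert x; decide

lemma cubeHom_injective (k : ℕ) : Function.Injective (cubeHom k) := by
  rw [injective_iff_map_eq_one]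
  intro a ha
  have hpt : ∀ g : Fin k → Bool, permPt a.left a.right g = g := by
    intro g
    have h1 := congrArg (fun e : (CubeFaces k : Set (Set (Fin k → Bool))) ≃o CubeFaces k =>
      (e ⟨{g}, singleton_mem_cubeFaces g⟩).val) ha
    have h2 : permPt a.left a.right '' {g} = {g} := h1
    rw [Set.image_singleton] at h2
    exact Set.singleton_eq_singleton_iff.mp h2
  have hv : ∀ j, bitM (a.left j) = false := by
    intro j
    have := congrFun (hpt fun _ => false) j
    simpa [permPt_apply] using this
  have hσ : ∀ j, a.right.symm j = j := by
    intro j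
    have := congrFun (hpt fun i => decide (i = a.right.symm j)) j
    rw [permPt_apply, hv] at this
    simp at this
    exact this.symm
  apply SemidirectProduct.ext
  · funext j
    exact bitM_eq_one (hv j)
  · apply Equiv.ext
    intro j
    have h7 := hσ (a.right j)
    rw [a.right.symm_apply_apply] at h7
    rw [SemidirectProduct.one_right]
    exact h7.symm

lemma cubeHom_surjective (k : ℕ) (hk : 1 ≤ k) : Function.Surjective (cubeHom k) := by
  intro φ
  classical
  choose ρf hρf using fun g => orderIso_singleton φ g
  choose ρi hρi using fun g => orderIso_singleton φ.symm g
  have hmapf : ∀ g, φ ⟨{g}, singleton_mem_cubeFaces g⟩ = ⟨{ρf g}, singleton_mem_cubeFaces _⟩ :=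
    fun g => Subtype.ext (hρf g)
  have hmapi : ∀ g, φ.symm ⟨{g}, singleton_mem_cubeFaces g⟩ = ⟨{ρi g}, singleton_mem_cubeFaces _⟩ :=
    fun g => Subtype.ext (hρi g)
  have hρli : ∀ g, ρi (ρf g) = g := by
    intro g
    have h1 := hmapi (ρf g)
    rw [← hmapf g, φ.symm_apply_apply] at h1
    exact (Set.singleton_eq_singleton_iff.mp (congrArg Subtype.val h1)).symm
  have hρri : ∀ g, ρf (ρi g) = g := by
    intro g
    have h1 := hmapf (ρi g)
    rw [← hmapi g, φ.apply_symm_apply] at h1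
    exact (Set.singleton_eq_singleton_iff.mp (congrArg Subtype.val h1)).symm
  have hρinj : Function.Injective ρf := Function.LeftInverse.injective hρli
  have hkey : ∀ A : (CubeFaces k : Set (Set (Fin k → Bool))), (φ A).val = ρf '' A.val := by
    intro A
    ext h2
    constructor
    · intro hh
      refine ⟨ρi h2, ?_, hρri h2⟩
      have h1 : (⟨{h2}, singleton_mem_cubeFaces h2⟩ : CubeFaces k) ≤ φ A :=
        le_mk (Set.singleton_subset_iff.mpr hh)
      have h3 : φ ⟨{ρi h2}, singleton_mem_cubeFaces _⟩ ≤ φ A := by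
        rw [hmapf (ρi h2)]
        have : ρf (ρi h2) = h2 := hρri h2
        rw [this]
        exact h1
      have h4 := φ.le_iff_le.mp h3
      exact Set.singleton_subset_iff.mp (le_val h4)
    · rintro ⟨g, hg, rfl⟩
      have h1 : (⟨{g}, singleton_mem_cubeFaces g⟩ : CubeFaces k) ≤ A :=
        le_mk (Set.singleton_subset_iff.mpr hg)
      have h2' := φ.monotone h1
      rw [hmapf g] at h2'
      exact Set.singleton_subset_iff.mp (le_val h2')
  have hco : ∀ (i : Fin k) (b : Bool), ∃ i' b', ρf '' Hf i b = Hf i' b' := by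
    intro i b
    have hval := hkey ⟨Hf i b, Hf_mem i b⟩
    have hnu : (φ ⟨Hf i b, Hf_mem i b⟩).val ≠ Set.univ := by
      intro h
      have h1 : φ ⟨Hf i b, Hf_mem i b⟩ = ⟨Set.univ, univ_mem_cubeFaces⟩ := Subtype.ext h
      have h2 := congrArg φ.symm h1
      rw [φ.symm_apply_apply, map_univ φ.symm] at h2
      exact Hf_ne_univ i b (congrArg Subtype.val h2)
    have hcoat : ∀ B ∈ CubeFaces k, (φ ⟨Hf i b, Hf_mem i b⟩).val ⊆ B →
        B = (φ ⟨Hf i b, Hf_mem i b⟩).val ∨ B = Set.univ := by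
      intro B hB hsub
      have h1 : φ ⟨Hf i b, Hf_mem i b⟩ ≤ ⟨B, hB⟩ := le_mk hsub
      have h2 : (⟨Hf i b, Hf_mem i b⟩ : CubeFaces k) ≤ φ.symm ⟨B, hB⟩ := by
        have := φ.symm.monotone h1
        rwa [φ.symm_apply_apply] at this
      by_cases hBu : (φ.symm ⟨B, hB⟩).val = Set.univ
      · right
        have h3 : φ.symm ⟨B, hB⟩ = ⟨Set.univ, univ_mem_cubeFaces⟩ := Subtype.ext hBu
        have h4 := congrArg φ h3
        rw [φ.apply_symm_apply, map_univ φ] at h4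
        exact congrArg Subtype.val h4
      · left
        have h3 : (φ.symm ⟨B, hB⟩).val = Hf i b :=
          Hf_coatom (φ.symm ⟨B, hB⟩).2 (le_val h2) hBu
        have h4 := congrArg φ (Subtype.ext h3 :
          φ.symm ⟨B, hB⟩ = ⟨Hf i b, Hf_mem i b⟩)
        rw [φ.apply_symm_apply] at h4
        exact congrArg Subtype.val h4
    obtain ⟨i', b', h⟩ := coatom_is_Hf hk (φ ⟨Hf i b, Hf_mem i b⟩).2 hnu hcoat
    exact ⟨i', b', by rw [← hval]; exact h⟩
  choose π1 π2 hπ using hco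
  have hmatch : ∀ i : Fin k, π1 i false = π1 i true ∧ π2 i false = !(π2 i true) := by
    intro i
    have hdisj : Hf (π1 i true) (π2 i true) ∩ Hf (π1 i false) (π2 i false) = ∅ := by
      rw [← hπ, ← hπ, ← Set.image_inter hρinj]
      have h1 : Hf i true ∩ Hf i false = ∅ := by
        ext g
        simp only [Hf, Set.mem_inter_iff, Set.mem_setOf_eq, Set.mem_empty_iff_false, iff_false]
        rintro ⟨h1, h2⟩
        rw [h1] at h2
        exact Bool.noConfusion h2
      rw [h1, Set.image_empty]
    have h2 := Hf_disjoint_iff hdisj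
    refine ⟨h2.1.symm, ?_⟩
    rw [h2.2]
    simp
  have hσinj : Function.Injective (fun i => π1 i true) := by
    intro i j hij
    simp only at hij
    by_contra hne
    obtain ⟨g, hg1, hg2⟩ := Hf_inter_nonempty (b := true) (c := true)
      (fun hc => hne hc.1)
    have e1 : ρf g ∈ Hf (π1 i true) (π2 i true) := hπ i true ▸ Set.mem_image_of_mem ρf hg1
    have e2 : ρf g ∈ Hf (π1 j true) (π2 j true) := hπ j true ▸ Set.mem_image_of_mem ρf hg2
    rw [← hij] at e2
    have e1' : ρf g (π1 i true) = π2 i true := e1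
    have e2' : ρf g (π1 i true) = π2 j true := e2
    have hb : π2 i true = π2 j true := e1'.symm.trans e2' 
    have hHeq : ρf '' Hf i true = ρf '' Hf j true := by
      rw [hπ, hπ, hij, hb]
    have := (Set.image_eq_image hρinj).mp hHeq
    exact hne (Hf_injective this).1
  let σ : Equiv.Perm (Fin k) := Equiv.ofBijective _ (Finite.injective_iff_bijective.mp hσinj)
  have hσdef : ∀ i, σ i = π1 i true := fun i => rfl
  have hval : ∀ (g : Fin k → Bool) (i : Fin k),
      ρf g (π1 i true) = xor (g i) (xor true (π2 i true)) := by
    intro g i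
    have hg : g ∈ Hf i (g i) := rfl
    have hm : ρf g ∈ Hf (π1 i (g i)) (π2 i (g i)) := hπ i (g i) ▸ Set.mem_image_of_mem ρf hg
    have hm' : ρf g (π1 i (g i)) = π2 i (g i) := hm
    cases hgi : g i
    · rw [hgi, (hmatch i).1, (hmatch i).2] at hm'
      rw [hm']
      cases π2 i true <;> rfl
    · rw [hgi] at hm'
      rw [hm']
      cases π2 i true <;> rfl
  let t : Fin k → Bool := fun j => xor true (π2 (σ.symm j) true)
  let v : Fin k → Multiplicative (ZMod 2) := fun j => Multiplicative.ofAdd (if t j then 1 else 0)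
  have hbitv : ∀ j, bitM (v j) = t j := by
    intro j
    cases htj : t j <;> simp [v, bitM, htj]
  refine ⟨⟨v, σ⟩, ?_⟩
  apply RelIso.ext
  intro A
  apply Subtype.ext
  show permPt v σ '' A.val = (φ A).val
  rw [hkey A]
  have hfun : ∀ g, permPt v σ g = ρf g := by
    intro g
    funext j
    have h5 := hval g (σ.symm j)
    have h6 : π1 (σ.symm j) true = j := by rw [← hσdef]; exact σ.apply_symm_apply j
    rw [h6] at h5
    rw [permPt_apply, hbitv, h5]
  exact Set.image_congr fun g _ => hfun g

end AutCubeAux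

/-- For `k ≥ 1`, the group of order-automorphisms of the face poset of the
`k`-cube is the hyperoctahedral group `(ℤ/2ℤ)^k ⋊ Sym(k)`, where `σ` acts by `v ↦ v ∘ σ⁻¹`. -/
theorem aut_cube (k : ℕ) (hk : 1 ≤ k) :
    Nonempty ((CubeFaces k ≃o CubeFaces k) ≃*
      (Fin k → Multiplicative (ZMod 2))
        ⋊[permHom (Fin k) (Multiplicative (ZMod 2))] Equiv.Perm (Fin k)) :=
  ⟨(MulEquiv.ofBijective (cubeHom k)
    ⟨cubeHom_injective k, cubeHom_surjective k hk⟩).symm⟩
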